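/- If a set of reals A ⊆ ω^ω contains a perfect subset (equivalently, there is a continuous injection f : 2^ω → ω^ω with range contained in A), then there is no wellordering of A that, pulled back under f × f, has the Baire property as a subset of 2^ω × 2^ω; consequently a set of reals admitting a wellordering with the Baire property (in the product topology) and containing a perfect subset yields a contradiction. In particular, there is no wellordering of the Cantor space 2^ω whose order relation, as a subset of 2^ω × 2^ω, has the property of Baire. -/

import Mathlib

open Set TopologicalSpace

section Helpers

variable {X : Type*} [TopologicalSpace X]

lemma wobp_not_isMeagre_of_isOpen [BaireSpace X] {U : Set X} (hU : IsOpen U)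
    (hne : U.Nonempty) : ¬ IsMeagre U := by
  intro h
  have hd : Dense Uᶜ := dense_of_mem_residual h
  obtain ⟨x, hx⟩ := hd.inter_open_nonempty U hU hne
  exact hx.2 hx.1

lemma wobp_isMeagre_union {s t : Set X} (hs : IsMeagre s) (ht : IsMeagre t) :
    IsMeagre (s ∪ t) := by
  rw [IsMeagre, Set.compl_union]
  exact Filter.inter_mem hs ht

lemma wobp_isMeagre_biUnion {ι : Type*} {S : Set ι} (hc : S.Countable) {f : ι → Set X}
    (h : ∀ i ∈ S, IsMeagre (f i)) : IsMeagre (⋃ i ∈ S, f i) := by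
  rw [IsMeagre, Set.compl_iUnion₂]
  exact (countable_bInter_mem hc).mpr h

lemma wobp_nonempty_inter [BaireSpace X] {U T : Set X} (hU : IsOpen U) (hne : U.Nonempty)
    (h : IsMeagre (U \ T)) : (U ∩ T).Nonempty := by
  rw [Set.nonempty_iff_ne_empty]
  intro he
  refine wobp_not_isMeagre_of_isOpen hU hne (h.mono (t := U) fun x hx => show x ∈ U \ T from ⟨hx, fun hT => ?_⟩)
  exact (Set.eq_empty_iff_forall_notMem.mp he x) ⟨hx, hT⟩

variable {Y : Type*} [TopologicalSpace Y]

lemma wobp_isMeagre_swap {M : Set (X × Y)} (h : IsMeagre M) :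
    IsMeagre (Prod.swap ⁻¹' M : Set (Y × X)) :=
  h.preimage_of_isOpenMap continuous_swap (Homeomorph.prodComm Y X).isOpenMap

/-- Easy direction of Kuratowski–Ulam: a meager set in a product has meager sections
over a comeager set of first coordinates. -/
lemma wobp_ku [SecondCountableTopology Y] {M : Set (X × Y)} (hM : IsMeagre M) :
    IsMeagre {x : X | ¬ IsMeagre {y : Y | (x, y) ∈ M}} := by
  rw [isMeagre_iff_countable_union_isNowhereDense] at hM
  obtain ⟨S, hnwd, hc, hsub⟩ := hM
  have key : ∀ t ∈ S, IsMeagre {x : X | ¬ Dense {y : Y | (x, y) ∉ closure t}} := by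
    intro t ht
    have hFc : IsClosed (closure t) := isClosed_closure
    have hWd : Dense (closure t)ᶜ := by
      rw [← interior_eq_empty_iff_dense_compl]
      exact hFc.isNowhereDense_iff.mp (hnwd t ht).closure
    rw [IsMeagre]
    have hres : (⋂ V ∈ {V ∈ countableBasis Y | Set.Nonempty V},
        {x : X | ∃ y ∈ V, (x, y) ∉ closure t}) ∈ residual X := by
      refine (countable_bInter_mem
        ((countable_countableBasis Y).mono (Set.sep_subset _ _))).mpr ?_
      rintro V ⟨hVb, hVne⟩
      apply residual_of_dense_open
      · have he : {x : X | ∃ y ∈ V, (x, y) ∉ closure t}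
            = ⋃ y ∈ V, (fun x => (x, y)) ⁻¹' (closure t)ᶜ := by
          ext x; simp [Set.mem_iUnion]
        rw [he]
        exact isOpen_biUnion fun y _ =>
          hFc.isOpen_compl.preimage (continuous_id.prodMk continuous_const)
      · rw [dense_iff_inter_open]
        intro U hUo hUne
        obtain ⟨⟨a, b⟩, ⟨haU, hbV⟩, hW⟩ := hWd.inter_open_nonempty (U ×ˢ V)
          (hUo.prod (isOpen_of_mem_countableBasis hVb)) (hUne.prod hVne)
        exact ⟨a, haU, b, hbV, hW⟩
    refine Filter.mem_of_superset hres ?_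
    intro x hx
    simp only [Set.mem_iInter, Set.mem_setOf_eq, Set.mem_sep_iff] at hx
    simp only [Set.mem_compl_iff, Set.mem_setOf_eq, not_not]
    rw [(isBasis_countableBasis Y).dense_iff]
    rintro o hob hone
    obtain ⟨y, hyo, hyt⟩ := hx o ⟨hob, hone⟩
    exact ⟨y, hyo, hyt⟩
  refine (wobp_isMeagre_biUnion hc key).mono ?_
  intro x hx
  simp only [Set.mem_setOf_eq] at hx
  by_contra hcon
  simp only [Set.mem_iUnion, Set.mem_setOf_eq, not_exists, not_not] at hcon
  apply hx
  rw [isMeagre_iff_countable_union_isNowhereDense]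
  refine ⟨(fun t => {y : Y | (x, y) ∈ closure t}) '' S, ?_, hc.image _, ?_⟩
  · rintro _ ⟨t, ht, rfl⟩
    have hcl : IsClosed {y : Y | (x, y) ∈ closure t} :=
      isClosed_closure.preimage (continuous_const.prodMk continuous_id)
    rw [hcl.isNowhereDense_iff, interior_eq_empty_iff_dense_compl]
    have := hcon t ht
    rwa [Set.compl_setOf]
  · intro y hy
    obtain ⟨t, ht, hyt⟩ := hsub hy
    exact ⟨{y : Y | (x, y) ∈ closure t}, ⟨t, ht, rfl⟩, subset_closure hyt⟩

/-- Second-coordinate version. -/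
lemma wobp_ku' [SecondCountableTopology X] {M : Set (X × Y)} (hM : IsMeagre M) :
    IsMeagre {y : Y | ¬ IsMeagre {x : X | (x, y) ∈ M}} :=
  wobp_ku (wobp_isMeagre_swap hM)

end Helpers

section Cantor

abbrev Xb := ℕ → Bool

lemma wobp_exists_ne_mem {U : Set Xb} (hU : IsOpen U) {x : Xb} (hx : x ∈ U) :
    ∃ y ∈ U, y ≠ x := by
  obtain ⟨I, u, hu, hsub⟩ := isOpen_pi_iff.mp hU x hx
  obtain ⟨n, hn⟩ := Infinite.exists_notMem_finset I
  refine ⟨Function.update x n (!x n), hsub ?_, ?_⟩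
  · intro i hi
    have hin : i ≠ n := by rintro rfl; exact hn (Finset.mem_coe.mp hi)
    rw [Function.update_of_ne hin]
    exact (hu i hi).2
  · intro he
    have h2 := congrFun he n
    rw [Function.update_self] at h2
    exact Bool.not_ne_self _ h2

lemma wobp_split {U : Set Xb} (hU : IsOpen U) (hne : U.Nonempty) :
    ∃ A B : Set Xb, IsOpen A ∧ IsOpen B ∧ A.Nonempty ∧ B.Nonempty ∧
      A ⊆ U ∧ B ⊆ U ∧ Disjoint A B := by
  obtain ⟨x, hx⟩ := hne
  obtain ⟨y, hy, hyx⟩ := wobp_exists_ne_mem hU hx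
  obtain ⟨v, w, hv, hw, hyv, hxw, hd⟩ := t2_separation hyx
  exact ⟨U ∩ v, U ∩ w, hU.inter hv, hU.inter hw, ⟨y, hy, hyv⟩, ⟨x, hx, hxw⟩,
    Set.inter_subset_left, Set.inter_subset_left,
    hd.mono Set.inter_subset_right Set.inter_subset_right⟩

/-- Core theorem: a wellfounded "linear" relation on Cantor space is never
Baire measurable as a subset of the square. -/
theorem wobp_core (s : Xb → Xb → Prop)
    (hlin : ∀ x y : Xb, x ≠ y → s x y ∨ s y x) (hwf : WellFounded s) :
    ¬ BaireMeasurableSet {p : Xb × Xb | s p.1 p.2} := by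
  intro hBP
  set S := {p : Xb × Xb | s p.1 p.2} with hSdef
  obtain ⟨O, hOo, hOe⟩ := hBP.residualEq_isOpen
  rw [Filter.eventuallyEq_set] at hOe
  have hm₁ : IsMeagre (S \ O) := by
    rw [IsMeagre]
    filter_upwards [hOe] with p hp
    simp only [Set.mem_compl_iff, Set.mem_diff, not_and, not_not]
    exact hp.mp
  have hm₂ : IsMeagre (O \ S) := by
    rw [IsMeagre]
    filter_upwards [hOe] with p hp
    simp only [Set.mem_compl_iff, Set.mem_diff, not_and, not_not]
    exact hp.mpr
  -- Step: in any nonempty open U there is a "green" box.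
  have step : ∀ U : Set Xb, IsOpen U → U.Nonempty → ∃ A B : Set Xb,
      IsOpen A ∧ IsOpen B ∧ A.Nonempty ∧ B.Nonempty ∧ A ⊆ U ∧ B ⊆ U ∧
      IsMeagre ((A ×ˢ B) \ S) := by
    intro U hUo hUne
    obtain ⟨U₁, U₂, h1o, h2o, h1ne, h2ne, h1s, h2s, hdis⟩ := wobp_split hUo hUne
    by_cases h : (O ∩ (U₁ ×ˢ U₂)).Nonempty
    · obtain ⟨p, hpO, hpU⟩ := h
      obtain ⟨A, B, hAo, hBo, hpA, hpB, hAB⟩ :=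
        isOpen_prod_iff.mp (hOo.inter (h1o.prod h2o)) p.1 p.2 (by simpa using ⟨hpO, hpU⟩)
      refine ⟨A ∩ U₁, B ∩ U₂, hAo.inter h1o, hBo.inter h2o, ⟨p.1, hpA, hpU.1⟩,
        ⟨p.2, hpB, hpU.2⟩, Set.inter_subset_right.trans h1s,
        Set.inter_subset_right.trans h2s, ?_⟩
      refine hm₂.mono ?_
      rintro ⟨a, b⟩ ⟨⟨⟨haA, _⟩, hbB, _⟩, hnS⟩
      exact ⟨(hAB (Set.mk_mem_prod haA hbB)).1, hnS⟩
    · have hred : IsMeagre (S ∩ (U₁ ×ˢ U₂)) := by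
        refine hm₁.mono ?_
        rintro q ⟨hqS, hqU⟩
        exact ⟨hqS, fun hqO => h ⟨q, hqO, hqU⟩⟩
      refine ⟨U₂, U₁, h2o, h1o, h2ne, h1ne, h2s, h1s, ?_⟩
      refine (wobp_isMeagre_swap hred).mono ?_
      rintro ⟨y, x⟩ ⟨⟨hy, hx⟩, hns⟩
      have hxy : x ≠ y := fun he => Set.disjoint_left.mp hdis hx (he ▸ hy)
      have hsxy : s x y := (hlin x y hxy).resolve_right hns
      exact ⟨hsxy, hx, hy⟩
  -- Pick: given a green box and a "large in B" target, pick a good point.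
  have pick : ∀ A B : Set Xb, IsOpen B → B.Nonempty → IsMeagre ((A ×ˢ B) \ S) →
      ∀ T : Set Xb, IsMeagre (B \ T) →
      ∃ z, z ∈ B ∧ z ∈ T ∧ IsMeagre (A \ {w | s w z}) := by
    intro A B hBo hBne hg T hT
    have key : IsMeagre {y : Xb | ¬ IsMeagre {x : Xb | (x, y) ∈ (A ×ˢ B) \ S}} :=
      wobp_ku' hg
    have hsub : B \ {y : Xb | IsMeagre (A \ {w | s w y})} ⊆
        {y : Xb | ¬ IsMeagre {x : Xb | (x, y) ∈ (A ×ˢ B) \ S}} := by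
      rintro y ⟨hyB, hny⟩
      intro hcon
      apply hny
      refine hcon.mono ?_
      rintro x ⟨hxA, hxs⟩
      exact ⟨⟨hxA, hyB⟩, hxs⟩
    have hBig : IsMeagre (B \ (T ∩ {y : Xb | IsMeagre (A \ {w | s w y})})) := by
      refine (wobp_isMeagre_union hT (key.mono hsub)).mono ?_
      rintro y ⟨hyB, hyn⟩
      by_cases hyT : y ∈ T
      · exact Or.inr ⟨hyB, fun hm => hyn ⟨hyT, hm⟩⟩
      · exact Or.inl ⟨hyB, hyT⟩
    obtain ⟨z, hzB, hzT, hz⟩ := wobp_nonempty_inter hBo hBne hBig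
    exact ⟨z, hzB, hzT, hz⟩
  -- The set of points generically above some nonempty open set.
  set T := {x : Xb | ∃ A B : Set Xb, IsOpen A ∧ IsOpen B ∧ A.Nonempty ∧ B.Nonempty ∧
      IsMeagre ((A ×ˢ B) \ S) ∧ x ∈ B ∧ IsMeagre (A \ {z | s z x})} with hTdef
  have hTne : T.Nonempty := by
    obtain ⟨A, B, hAo, hBo, hAne, hBne, _, _, hg⟩ :=
      step Set.univ isOpen_univ ⟨fun _ => false, trivial⟩
    obtain ⟨z, hzB, _, hz⟩ := pick A B hBo hBne hg Set.univ (by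
      simpa [Set.diff_self] using IsMeagre.empty)
    exact ⟨z, A, B, hAo, hBo, hAne, hBne, hg, hzB, hz⟩
  obtain ⟨m, hmT, hmin⟩ := hwf.has_min T hTne
  obtain ⟨A, B, hAo, hBo, hAne, hBne, hg, hmB, hmP⟩ := hmT
  obtain ⟨A', B', hA'o, hB'o, hA'ne, hB'ne, hA's, hB's, hg'⟩ := step A hAo hAne
  obtain ⟨z, hzB', hzs, hz⟩ := pick A' B' hB'o hB'ne hg' {w | s w m}
    (hmP.mono (t := B' \ {w | s w m}) fun w hw => show w ∈ A \ {z | s z m} from ⟨hB's hw.1, hw.2⟩)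
  exact hmin z ⟨A', B', hA'o, hB'o, hA'ne, hB'ne, hg', hzB', hz⟩ hzs

end Cantor

/-- A set has the property of Baire iff it differs from an open set by a meager set;
this is `BaireMeasurableSet` in Mathlib. A wellordering of a set of reals pulled back
under a continuous injection of Cantor space into the set never has the property of
Baire; in particular there is no wellordering of Cantor space whose order relation has
the property of Baire. -/
theorem stmt_0 :
    (∀ (A : Set (ℕ → ℕ)) (f : (ℕ → Bool) → (ℕ → ℕ)),
      Continuous f → Function.Injective f → ∀ (hran : ∀ y, f y ∈ A),
      ∀ r : A → A → Prop, IsWellOrder A r →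
      ¬ BaireMeasurableSet {p : (ℕ → Bool) × (ℕ → Bool) |
          r ⟨f p.1, hran p.1⟩ ⟨f p.2, hran p.2⟩}) ∧
    (∀ s : (ℕ → Bool) → (ℕ → Bool) → Prop, IsWellOrder (ℕ → Bool) s →
      ¬ BaireMeasurableSet {p : (ℕ → Bool) × (ℕ → Bool) | s p.1 p.2}) := by
  constructor
  · intro A f _hc hinj hran r hwo
    haveI := hwo
    refine wobp_core (fun x y => r ⟨f x, hran x⟩ ⟨f y, hran y⟩) ?_ ?_
    · intro x y hxy
      have hne : (⟨f x, hran x⟩ : A) ≠ ⟨f y, hran y⟩ := by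
        intro h
        exact hxy (hinj (congrArg Subtype.val h))
      rcases trichotomous_of r (⟨f x, hran x⟩ : A) ⟨f y, hran y⟩ with h | h | h
      · exact Or.inl h
      · exact absurd h hne
      · exact Or.inr h
    · exact InvImage.wf (fun x => (⟨f x, hran x⟩ : A)) IsWellFounded.wf
  · intro s hwo
    haveI := hwo
    refine wobp_core s ?_ IsWellFounded.wf
    intro x y hxy
    rcases trichotomous_of s x y with h | h | h
    exacts [Or.inl h, absurd h hxy, Or.inr h]
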